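/- The function φ(ξ) = (3√2/2)·tanh((√2/3)·ξ) satisfies φ‴(ξ) + φ(ξ)·φ″(ξ) + ((2φ(ξ)² + 3φ′(ξ) + 1)/9)·φ′(ξ) = 0 for all ξ ∈ ℝ, and the function φ(ξ) = (3√2/2)·coth((√2/3)·ξ) satisfies the same equation for all ξ ≠ 0. -/

import Mathlib

/-- The fully affine extremal (Euler–Lagrange) operator with parameter `ε`:
`φ‴ + φ·φ″ + ((2φ² + 3φ′ + ε)/9)·φ′`. -/
noncomputable def extremalOp (ε : ℝ) (φ : ℝ → ℝ) (ξ : ℝ) : ℝ :=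
  iteratedDeriv 3 φ ξ + φ ξ * iteratedDeriv 2 φ ξ
    + ((2 * (φ ξ) ^ 2 + 3 * deriv φ ξ + ε) / 9) * deriv φ ξ

section aux
variable (c : ℝ)

lemma hsC (ξ : ℝ) : HasDerivAt (fun s => Real.sinh (c * s)) (Real.cosh (c * ξ) * c) ξ :=
  (Real.hasDerivAt_sinh _).comp ξ (by simpa using (hasDerivAt_id ξ).const_mul c)

lemma hcC (ξ : ℝ) : HasDerivAt (fun s => Real.cosh (c * s)) (Real.sinh (c * ξ) * c) ξ :=
  (Real.hasDerivAt_cosh _).comp ξ (by simpa using (hasDerivAt_id ξ).const_mul c)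

end aux

lemma key_tanh (S C a c : ℝ) (hC : C ≠ 0) (h1 : C^2 - S^2 = 1) (hac : a*c = 1)
    (hac3 : a*c^3 = 2/9) (h3 : a^2*c^2 = 1) (h4 : a^3*c = 9/2) :
    (-(2*a*c^3)*(C^2-3*S^2))/C^4 + (a*(S/C)) * (-(2*a*c^2*S)/C^3)
      + ((2*(a*(S/C))^2 + 3*(a*c/C^2) + 1)/9) * (a*c/C^2) = 0 := by
  field_simp
  linear_combination (-18*C^2+54*S^2)*hac3 + (-18*S^2+3)*h3 + (2*S^2)*h4 + C^2*hac - 3*h1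

lemma key_coth (S C a c : ℝ) (hS : S ≠ 0) (h1 : C^2 - S^2 = 1) (hac : a*c = 1)
    (hac3 : a*c^3 = 2/9) (h3 : a^2*c^2 = 1) (h4 : a^3*c = 9/2) :
    ((2*a*c^3)*(S^2-3*C^2))/S^4 + (a*(C/S)) * ((2*a*c^2*C)/S^3)
      + ((2*(a*(C/S))^2 + 3*(-(a*c/S^2)) + 1)/9) * (-(a*c/S^2)) = 0 := by
  field_simp
  linear_combination (18*S^2-54*C^2)*hac3 + (18*C^2+3)*h3 - (2*C^2)*h4 - S^2*hac - 3*h1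

section tanh
variable (a c : ℝ)

lemma td1 (ξ : ℝ) : HasDerivAt (fun s => a * (Real.sinh (c * s) / Real.cosh (c * s)))
    (a * c / Real.cosh (c * ξ) ^ 2) ξ := by
  have h := ((hsC c ξ).div (hcC c ξ) (Real.cosh_pos _).ne').const_mul a
  refine h.congr_deriv (Eq.symm ?_)
  have h1 : Real.cosh (c*ξ) ^ 2 - Real.sinh (c*ξ) ^ 2 = 1 := Real.cosh_sq_sub_sinh_sq _
  have h2 : Real.cosh (c*ξ) * c * Real.cosh (c*ξ) - Real.sinh (c*ξ) * (Real.sinh (c*ξ) * c) = c := by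
    linear_combination c * h1
  rw [h2, mul_div_assoc]

lemma td2 (ξ : ℝ) : HasDerivAt (fun x => a * c / Real.cosh (c * x) ^ 2)
    (-(2*a*c^2*Real.sinh (c*ξ))/Real.cosh (c*ξ)^3) ξ := by
  have h := (hasDerivAt_const ξ (a*c)).div ((hcC c ξ).pow 2)
    (pow_ne_zero 2 (Real.cosh_pos _).ne')
  refine h.congr_deriv (Eq.symm ?_)
  have hC := (Real.cosh_pos (c*ξ)).ne'
  simp only [Pi.pow_apply, Pi.neg_apply]
  field_simp
  ring

lemma td3 (ξ : ℝ) : HasDerivAt (fun x => -(2*a*c^2*Real.sinh (c*x))/Real.cosh (c*x)^3)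
    ((-(2*a*c^3)*(Real.cosh (c*ξ)^2-3*Real.sinh (c*ξ)^2))/Real.cosh (c*ξ)^4) ξ := by
  have h := (((hsC c ξ).const_mul (2*a*c^2)).neg.div ((hcC c ξ).pow 3)
    (pow_ne_zero 3 (Real.cosh_pos _).ne'))
  refine h.congr_deriv (Eq.symm ?_)
  have hC := (Real.cosh_pos (c*ξ)).ne'
  simp only [Pi.pow_apply, Pi.neg_apply]
  field_simp
  ring

lemma cd1 (ξ : ℝ) (hξ : c * ξ ≠ 0) :
    HasDerivAt (fun s => a * (Real.cosh (c * s) / Real.sinh (c * s)))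
      (-(a * c / Real.sinh (c * ξ) ^ 2)) ξ := by
  have hS : Real.sinh (c*ξ) ≠ 0 := Real.sinh_ne_zero.2 hξ
  have h := ((hcC c ξ).div (hsC c ξ) hS).const_mul a
  refine h.congr_deriv (Eq.symm ?_)
  have h1 : Real.cosh (c*ξ) ^ 2 - Real.sinh (c*ξ) ^ 2 = 1 := Real.cosh_sq_sub_sinh_sq _
  field_simp
  linear_combination (a*c) * h1

lemma cd2 (ξ : ℝ) (hξ : c * ξ ≠ 0) :
    HasDerivAt (fun x => -(a * c / Real.sinh (c * x) ^ 2))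
      ((2*a*c^2*Real.cosh (c*ξ))/Real.sinh (c*ξ)^3) ξ := by
  have hS : Real.sinh (c*ξ) ≠ 0 := Real.sinh_ne_zero.2 hξ
  have h := ((hasDerivAt_const ξ (a*c)).div ((hsC c ξ).pow 2) (pow_ne_zero 2 hS)).neg
  refine h.congr_deriv (Eq.symm ?_)
  simp only [Pi.pow_apply, Pi.neg_apply]
  field_simp
  ring

lemma cd3 (ξ : ℝ) (hξ : c * ξ ≠ 0) :
    HasDerivAt (fun x => 2*a*c^2*Real.cosh (c*x)/Real.sinh (c*x)^3)
      (((2*a*c^3)*(Real.sinh (c*ξ)^2-3*Real.cosh (c*ξ)^2))/Real.sinh (c*ξ)^4) ξ := by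
  have hS : Real.sinh (c*ξ) ≠ 0 := Real.sinh_ne_zero.2 hξ
  have h := ((hcC c ξ).const_mul (2*a*c^2)).div ((hsC c ξ).pow 3) (pow_ne_zero 3 hS)
  refine h.congr_deriv (Eq.symm ?_)
  simp only [Pi.pow_apply, Pi.neg_apply]
  field_simp
  ring

end tanh

/-- The curves with fully affine curvature `(3√2/2)·tanh((√2/3)ξ)` and
`(3√2/2)·coth((√2/3)ξ)` are fully affine extremal (case `ε = 1`). -/
theorem tanh_coth_extremal :
    (∀ ξ : ℝ,
      extremalOp 1 (fun s => 3 * Real.sqrt 2 / 2 * Real.tanh (Real.sqrt 2 / 3 * s)) ξ = 0) ∧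
    (∀ ξ : ℝ, ξ ≠ 0 →
      extremalOp 1 (fun s => 3 * Real.sqrt 2 / 2 *
        (Real.cosh (Real.sqrt 2 / 3 * s) / Real.sinh (Real.sqrt 2 / 3 * s))) ξ = 0) := by
  set a : ℝ := 3 * Real.sqrt 2 / 2 with ha
  set c : ℝ := Real.sqrt 2 / 3 with hcdef
  have hs2 : Real.sqrt 2 * Real.sqrt 2 = 2 := Real.mul_self_sqrt (by norm_num)
  have hac : a * c = 1 := by rw [ha, hcdef]; field_simp; nlinarith [hs2]
  have hac3 : a * c ^ 3 = 2/9 := by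
    rw [ha, hcdef]; field_simp; ring_nf; nlinarith [hs2]
  have h3 : a ^ 2 * c ^ 2 = 1 := by nlinarith [hac]
  have h4 : a ^ 3 * c = 9/2 := by
    rw [ha, hcdef]; field_simp; ring_nf; nlinarith [hs2]
  have hcpos : (0:ℝ) < c := by rw [hcdef]; positivity
  constructor
  · intro ξ
    have hφ : (fun s => 3 * Real.sqrt 2 / 2 * Real.tanh (Real.sqrt 2 / 3 * s))
        = (fun s => a * (Real.sinh (c * s) / Real.cosh (c * s))) := by
      funext s; rw [Real.tanh_eq_sinh_div_cosh]
    rw [hφ]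
    have hD1 : deriv (fun s => a * (Real.sinh (c * s) / Real.cosh (c * s)))
        = fun x => a * c / Real.cosh (c * x) ^ 2 := funext fun x => (td1 a c x).deriv
    have hD2 : deriv (fun x => a * c / Real.cosh (c * x) ^ 2)
        = fun x => -(2*a*c^2*Real.sinh (c*x))/Real.cosh (c*x)^3 :=
      funext fun x => (td2 a c x).deriv
    have hI2 : iteratedDeriv 2 (fun s => a * (Real.sinh (c * s) / Real.cosh (c * s))) ξ
        = -(2*a*c^2*Real.sinh (c*ξ))/Real.cosh (c*ξ)^3 := by
      rw [iteratedDeriv_succ, iteratedDeriv_one, hD1]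
      exact (td2 a c ξ).deriv
    have hI3 : iteratedDeriv 3 (fun s => a * (Real.sinh (c * s) / Real.cosh (c * s))) ξ
        = (-(2*a*c^3)*(Real.cosh (c*ξ)^2-3*Real.sinh (c*ξ)^2))/Real.cosh (c*ξ)^4 := by
      rw [iteratedDeriv_succ, iteratedDeriv_succ, iteratedDeriv_one, hD1, hD2]
      exact (td3 a c ξ).deriv
    rw [extremalOp, hI2, hI3, hD1]
    exact key_tanh _ _ _ _ (Real.cosh_pos _).ne' (Real.cosh_sq_sub_sinh_sq _) hac hac3 h3 h4
  · intro ξ hξ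
    have hcξ : c * ξ ≠ 0 := mul_ne_zero hcpos.ne' hξ
    have hS : Real.sinh (c*ξ) ≠ 0 := Real.sinh_ne_zero.2 hcξ
    have hev : ∀ᶠ x in nhds ξ, x ≠ 0 := by
      filter_upwards [isOpen_compl_singleton.mem_nhds (by simpa using hξ)] with x hx
      simpa using hx
    have hD1 : ∀ x : ℝ, x ≠ 0 →
        deriv (fun s => a * (Real.cosh (c * s) / Real.sinh (c * s))) x
        = -(a * c / Real.sinh (c * x) ^ 2) := fun x hx =>
      (cd1 a c x (mul_ne_zero hcpos.ne' hx)).deriv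
    have hE1 : deriv (fun s => a * (Real.cosh (c * s) / Real.sinh (c * s)))
        =ᶠ[nhds ξ] fun x => -(a * c / Real.sinh (c * x) ^ 2) := by
      filter_upwards [hev] with x hx; exact hD1 x hx
    have hD2 : ∀ x : ℝ, x ≠ 0 →
        deriv (deriv (fun s => a * (Real.cosh (c * s) / Real.sinh (c * s)))) x
        = (2*a*c^2*Real.cosh (c*x))/Real.sinh (c*x)^3 := by
      intro x hx
      have hE : deriv (fun s => a * (Real.cosh (c * s) / Real.sinh (c * s)))
          =ᶠ[nhds x] fun y => -(a * c / Real.sinh (c * y) ^ 2) := by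
        filter_upwards [isOpen_compl_singleton.mem_nhds (by simpa using hx)] with y hy
        exact hD1 y (by simpa using hy)
      rw [hE.deriv_eq]
      exact (cd2 a c x (mul_ne_zero hcpos.ne' hx)).deriv
    have hI2 : iteratedDeriv 2 (fun s => a * (Real.cosh (c * s) / Real.sinh (c * s))) ξ
        = (2*a*c^2*Real.cosh (c*ξ))/Real.sinh (c*ξ)^3 := by
      rw [iteratedDeriv_succ, iteratedDeriv_one]
      exact hD2 ξ hξ
    have hI3 : iteratedDeriv 3 (fun s => a * (Real.cosh (c * s) / Real.sinh (c * s))) ξ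
        = ((2*a*c^3)*(Real.sinh (c*ξ)^2-3*Real.cosh (c*ξ)^2))/Real.sinh (c*ξ)^4 := by
      rw [iteratedDeriv_succ, iteratedDeriv_succ, iteratedDeriv_one]
      have hE2 : deriv (deriv (fun s => a * (Real.cosh (c * s) / Real.sinh (c * s))))
          =ᶠ[nhds ξ] fun x => (2*a*c^2*Real.cosh (c*x))/Real.sinh (c*x)^3 := by
        filter_upwards [hev] with x hx; exact hD2 x hx
      rw [hE2.deriv_eq]
      exact (cd3 a c ξ hcξ).deriv
    rw [extremalOp, hI2, hI3, hD1 ξ hξ]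
    exact key_coth _ _ _ _ hS (Real.cosh_sq_sub_sinh_sq _) hac hac3 h3 h4
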